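/- Let B be the incidence matrix of a symmetric 2-(v,k,λ) design. There exists a complex number a of absolute value 1 such that the matrix obtained from B by replacing every 0 entry with a is a complex Hadamard matrix of order v if and only if (v − √v)/2 ≤ k ≤ (v + √v)/2. -/

import Mathlib

open Matrix

/-- `H` is a complex Hadamard matrix: unimodular entries and `H Hᴴ = n • I`. -/
def IsCHadamard {n : Type*} [Fintype n] [DecidableEq n] (H : Matrix n n ℂ) : Prop :=
  (∀ i j, ‖H i j‖ = 1) ∧
    H * H.conjTranspose = (Fintype.card n : ℂ) • 1

/-- `B` is the incidence matrix (over `ℂ`, with `0`/`1` entries) of a symmetric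
`2-(v,k,λ)` design. -/
def IsIncidence (v k lam : ℕ) (B : Matrix (Fin v) (Fin v) ℂ) : Prop :=
  (∀ i j, B i j = 0 ∨ B i j = 1) ∧
    (∀ i, ∑ j, B i j = (k : ℂ)) ∧ (∀ j, ∑ i, B i j = (k : ℂ)) ∧
    B * B.transpose = ((k : ℂ) - (lam : ℂ)) • 1 + (lam : ℂ) • Matrix.of (fun _ _ => (1 : ℂ))

lemma key_entry (v k lam : ℕ) (B : Matrix (Fin v) (Fin v) ℂ) (hB : IsIncidence v k lam B)
    (a : ℂ) (ha : a * (starRingEnd ℂ) a = 1) (i j : Fin v) :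
    ((Matrix.of fun i j => if B i j = 0 then a else B i j) *
      (Matrix.of fun i j => if B i j = 0 then a else B i j).conjTranspose) i j
      = if i = j then (v : ℂ)
        else (2 - (a + (starRingEnd ℂ) a)) * lam + ((a + (starRingEnd ℂ) a) - 2) * k + v := by
  obtain ⟨h01, hrow, hcol, hBBT⟩ := hB
  have hterm : ∀ l, (if B i l = 0 then a else B i l) * (starRingEnd ℂ) (if B j l = 0 then a else B j l)
      = (2 - (a + (starRingEnd ℂ) a)) * (B i l * B j l)
        + ((starRingEnd ℂ) a - 1) * B i l + (a - 1) * B j l + 1 := by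
    intro l
    rcases h01 i l with h1 | h1 <;> rcases h01 j l with h2 | h2 <;>
      simp [h1, h2, ha] <;> ring
  have hP : ∑ l, B i l * B j l = (B * B.transpose) i j := by
    simp [mul_apply, transpose_apply]
  have hsum : ((Matrix.of fun i j => if B i j = 0 then a else B i j) *
      (Matrix.of fun i j => if B i j = 0 then a else B i j).conjTranspose) i j
      = (2 - (a + (starRingEnd ℂ) a)) * ((B * B.transpose) i j)
        + ((starRingEnd ℂ) a - 1) * k + (a - 1) * k + v := by
    rw [mul_apply]
    simp only [conjTranspose_apply, of_apply, RCLike.star_def]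
    rw [Finset.sum_congr rfl (fun l _ => hterm l)]
    rw [Finset.sum_add_distrib, Finset.sum_add_distrib, Finset.sum_add_distrib,
      ← Finset.mul_sum, ← Finset.mul_sum, ← Finset.mul_sum, hP, hrow i, hrow j]
    simp
  rw [hsum, hBBT]
  by_cases hij : i = j <;>
    simp [hij, one_apply, Matrix.add_apply, Matrix.smul_apply] <;> ring

lemma design_id (v k lam : ℕ) (hv : 0 < v) (B : Matrix (Fin v) (Fin v) ℂ)
    (hB : IsIncidence v k lam B) : k ^ 2 + lam = k + lam * v := by
  obtain ⟨h01, hrow, hcol, hBBT⟩ := hB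
  have h1 : ∑ i, ∑ j, (B * B.transpose) i j = (v : ℂ) * k ^ 2 := by
    simp only [mul_apply, transpose_apply]
    have : ∀ i : Fin v, ∑ j, ∑ l, B i l * B j l = (k : ℂ) * k := by
      intro i
      rw [Finset.sum_comm]
      have : ∀ l : Fin v, ∑ j, B i l * B j l = B i l * k := by
        intro l; rw [← Finset.mul_sum, hcol l]
      rw [Finset.sum_congr rfl (fun l _ => this l), ← Finset.sum_mul, hrow i]
    rw [Finset.sum_congr rfl (fun i _ => this i), Finset.sum_const, Finset.card_univ,
      Fintype.card_fin, nsmul_eq_mul]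
    ring
  rw [hBBT] at h1
  have h2 : ∑ i : Fin v, ∑ j : Fin v,
      ((((k : ℂ) - lam) • 1 + (lam : ℂ) • Matrix.of (fun _ _ => (1:ℂ))) i j)
      = v * ((k : ℂ) - lam) + lam * v ^ 2 := by
    simp [Matrix.add_apply, Matrix.smul_apply, one_apply, Finset.sum_ite_eq,
      Finset.sum_add_distrib]
    ring
  rw [h2] at h1
  have hvC : (v : ℂ) ≠ 0 := Nat.cast_ne_zero.mpr hv.ne'
  have h3 : (v : ℂ) * ((k : ℂ) ^ 2 + lam) = v * ((k : ℂ) + lam * v) := by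
    linear_combination -h1
  have := mul_left_cancel₀ hvC h3
  exact_mod_cast this

theorem stmt0 (v k lam : ℕ) (hlk : lam < k) (hkv : k < v)
    (B : Matrix (Fin v) (Fin v) ℂ) (hB : IsIncidence v k lam B) :
    (∃ a : ℂ, ‖a‖ = 1 ∧
        IsCHadamard (Matrix.of fun i j => if B i j = 0 then a else B i j)) ↔
      (((v : ℝ) - Real.sqrt v) / 2 ≤ (k : ℝ) ∧ (k : ℝ) ≤ ((v : ℝ) + Real.sqrt v) / 2) := by
  have hv2 : 2 ≤ v := by omega
  have hvR : (2 : ℝ) ≤ v := by exact_mod_cast hv2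
  have hidN := design_id v k lam (by omega) B hB
  have hidR : (k : ℝ) ^ 2 + lam = k + lam * v := by exact_mod_cast hidN
  have hd : (0 : ℝ) < (k : ℝ) - lam := by
    have : (lam : ℝ) < k := by exact_mod_cast hlk
    linarith
  have hkR : (k : ℝ) < v := by exact_mod_cast hkv
  have hs : (0 : ℝ) ≤ Real.sqrt v := Real.sqrt_nonneg _
  have hsq : Real.sqrt v ^ 2 = v := Real.sq_sqrt (by positivity)
  constructor
  · rintro ⟨a, ha1, habs, heq⟩
    have ha : a * (starRingEnd ℂ) a = 1 := by
      rw [Complex.mul_conj, Complex.normSq_eq_norm_sq, ha1]; norm_num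
    have h := key_entry v k lam B hB a ha ⟨0, by omega⟩ ⟨1, by omega⟩
    rw [heq] at h
    simp only [Matrix.smul_apply, one_apply, Fin.mk.injEq] at h
    norm_num at h
    rw [Complex.add_conj] at h
    have h0R : ((2 : ℝ) - 2 * a.re) * lam + (2 * a.re - 2) * k + v = 0 := by
      exact_mod_cast h.symm
    have hre : |a.re| ≤ 1 := by
      have := Complex.abs_re_le_norm a
      rwa [ha1] at this
    obtain ⟨hrm, hrp⟩ := abs_le.mp hre
    have h4 : (v : ℝ) ≤ 4 * ((k : ℝ) - lam) := by nlinarith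
    have hsqle : ((v : ℝ) - 2 * k) ^ 2 ≤ v := by
      nlinarith [mul_le_mul_of_nonneg_right h4 (by linarith : (0:ℝ) ≤ (v : ℝ) - 1)]
    have habs2 : |(v : ℝ) - 2 * k| ≤ Real.sqrt v := by
      rw [← Real.sqrt_sq_eq_abs]
      exact Real.sqrt_le_sqrt hsqle
    obtain ⟨l1, l2⟩ := abs_le.mp habs2
    constructor <;> linarith
  · rintro ⟨h1, h2⟩
    have habs2 : |(v : ℝ) - 2 * k| ≤ Real.sqrt v :=
      abs_le.mpr ⟨by linarith, by linarith⟩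
    have hsqle : ((v : ℝ) - 2 * k) ^ 2 ≤ v := by
      calc ((v : ℝ) - 2 * k) ^ 2 = |(v : ℝ) - 2 * k| ^ 2 := (sq_abs _).symm
        _ ≤ Real.sqrt v ^ 2 := by
            exact pow_le_pow_left₀ (abs_nonneg _) habs2 2
        _ = v := hsq
    have h4 : (v : ℝ) ≤ 4 * ((k : ℝ) - lam) := by
      nlinarith [hsqle, hidR, hvR]
    set r : ℝ := 1 - (v : ℝ) / (2 * ((k : ℝ) - lam)) with hrdef
    have hdiv : (0 : ℝ) ≤ (v : ℝ) / (2 * ((k : ℝ) - lam)) := by positivity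
    have hr1 : r ≤ 1 := by simp [hrdef]; linarith
    have hrm1 : -1 ≤ r := by
      rw [hrdef]
      have : (v : ℝ) / (2 * ((k : ℝ) - lam)) ≤ 2 := by
        rw [div_le_iff₀ (by linarith)]
        linarith
      linarith
    have hr2 : (0 : ℝ) ≤ 1 - r ^ 2 := by nlinarith
    set a : ℂ := (r : ℂ) + Real.sqrt (1 - r ^ 2) * Complex.I with hadef
    have hare : a.re = r := by simp [hadef]
    have haim : a.im = Real.sqrt (1 - r ^ 2) := by simp [hadef]
    have hnorm : Complex.normSq a = 1 := by
      rw [Complex.normSq_apply, hare, haim, Real.mul_self_sqrt hr2]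
      ring
    have ha1 : ‖a‖ = 1 := by
      rw [Complex.norm_def, hnorm, Real.sqrt_one]
    have ha : a * (starRingEnd ℂ) a = 1 := by
      rw [Complex.mul_conj, hnorm, Complex.ofReal_one]
    refine ⟨a, ha1, ?_, ?_⟩
    · intro i j
      rcases hB.1 i j with h | h <;> simp [h, ha1]
    · ext i j
      rw [key_entry v k lam B hB a ha i j]
      simp only [Matrix.smul_apply, one_apply, Fintype.card_fin]
      by_cases hij : i = j
      · simp [hij]
      · simp only [hij, if_false, smul_zero]
        rw [Complex.add_conj, hare]
        have hR : ((2 : ℝ) - 2 * r) * lam + (2 * r - 2) * k + v = 0 := by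
          rw [hrdef]
          field_simp
          ring
        exact_mod_cast congrArg (Complex.ofReal) hR
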